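/- Let f : [a,b] → ℝ be Hölder continuous of order r ∈ (0,1] with constant H, and u : [a,b] → ℝ of bounded variation. Then for all x ∈ [a,b], |∫ₐᵇ f du − [u(x) − u(a)]·f(a) − [u(b) − u(x)]·f(b)| ≤ H · ((b−a)/2 + |x − (a+b)/2|)^r · V(u;[a,b]). -/

import Mathlib

/-- A tagged partition of the interval `[a, b]`. -/
structure TaggedPartition (a b : ℝ) where
  n : ℕ
  pts : ℕ → ℝ
  tag : ℕ → ℝ
  mono : ∀ i, pts i ≤ pts (i + 1)
  first : pts 0 = a
  last : pts n = b
  tag_mem : ∀ i, pts i ≤ tag i ∧ tag i ≤ pts (i + 1)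

/-- The Riemann–Stieltjes sum of `f` with respect to `u` over a tagged partition. -/
def RSsum (f u : ℝ → ℝ) {a b : ℝ} (P : TaggedPartition a b) : ℝ :=
  ∑ i ∈ Finset.range P.n, f (P.tag i) * (u (P.pts (i + 1)) - u (P.pts i))

/-- `IsRSIntegral f u a b I` means the Riemann–Stieltjes integral `∫ₐᵇ f du` exists
and equals `I`: Riemann–Stieltjes sums converge to `I` as the mesh tends to `0`. -/
def IsRSIntegral (f u : ℝ → ℝ) (a b I : ℝ) : Prop :=
  ∀ ε > 0, ∃ δ > 0, ∀ P : TaggedPartition a b,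
    (∀ i < P.n, P.pts (i + 1) - P.pts i < δ) → |RSsum f u P - I| < ε

/-- The total (Jordan) variation of `u` on `[a, b]`. -/
noncomputable def totalVar (u : ℝ → ℝ) (a b : ℝ) : ℝ :=
  (eVariationOn u (Set.Icc a b)).toReal

theorem two_point_trapezoid_bounded_variation
    (a b H r x I : ℝ) (f u : ℝ → ℝ)
    (hr : 0 < r) (hr1 : r ≤ 1) (hH : 0 ≤ H)
    (hf : ∀ s ∈ Set.Icc a b, ∀ t ∈ Set.Icc a b, |f s - f t| ≤ H * |s - t| ^ r)
    (hu : BoundedVariationOn u (Set.Icc a b))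
    (hx : x ∈ Set.Icc a b)
    (hI : IsRSIntegral f u a b I) :
    |I - (u x - u a) * f a - (u b - u x) * f b| ≤
      H * ((b - a) / 2 + |x - (a + b) / 2|) ^ r * totalVar u a b := by
  obtain ⟨hax, hxb⟩ := hx
  have hab : a ≤ b := hax.trans hxb
  set K : ℝ := (b - a) / 2 + |x - (a + b) / 2| with hKdef
  have hxaK : x - a ≤ K := by
    have h := le_abs_self (x - (a + b) / 2); rw [hKdef]; linarith
  have hbxK : b - x ≤ K := by
    have h := neg_abs_le (x - (a + b) / 2); rw [hKdef]; linarith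
  have hK0 : 0 ≤ K := le_trans (by linarith) hxaK
  have hHK0 : 0 ≤ H * K ^ r := mul_nonneg hH (Real.rpow_nonneg hK0 r)
  rw [show I - (u x - u a) * f a - (u b - u x) * f b
      = I - ((u x - u a) * f a + (u b - u x) * f b) by ring]
  set S : ℝ := (u x - u a) * f a + (u b - u x) * f b with hSdef
  apply le_of_forall_pos_le_add
  intro ε hε
  obtain ⟨δ, hδ0, hδ⟩ := hI ε hε
  obtain ⟨N, hNgt⟩ := exists_nat_gt (max 1 ((b - a) / δ))
  have hN1 : (1 : ℝ) ≤ N := le_of_lt (lt_of_le_of_lt (le_max_left _ _) hNgt)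
  have hN0 : (0 : ℝ) < N := lt_of_lt_of_le zero_lt_one hN1
  have hNne : (N : ℝ) ≠ 0 := ne_of_gt hN0
  have hmesh : (b - a) / N < δ := by
    rw [div_lt_iff₀ hN0]
    have h2 : (b - a) / δ < N := lt_of_le_of_lt (le_max_right _ _) hNgt
    rw [div_lt_iff₀ hδ0] at h2
    linarith
  set p : ℕ → ℝ := fun i =>
    if i ≤ N then a + (i : ℝ) * ((x - a) / N) else x + ((i : ℝ) - N) * ((b - x) / N) with hp
  have hpN : p N = x := by
    simp only [hp, le_refl, if_pos]
    field_simp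
    ring
  have hp0 : p 0 = a := by simp [hp]
  have hp2N : p (2 * N) = b := by
    have hNn : 1 ≤ N := by exact_mod_cast hN1
    have h2 : ¬ (2 * N ≤ N) := by omega
    simp only [hp, if_neg h2]
    push_cast
    field_simp
    ring
  have hstep : ∀ i, p (i + 1) - p i = (x - a) / N ∨ p (i + 1) - p i = (b - x) / N := by
    intro i
    by_cases h1 : i + 1 ≤ N
    · left
      have h0 : i ≤ N := le_of_lt (lt_of_lt_of_le (Nat.lt_succ_self i) h1)
      simp only [hp, if_pos h1, if_pos h0]
      push_cast
      ring
    · right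
      by_cases h0 : i ≤ N
      · have hiN : i = N := by omega
        subst hiN
        rw [hpN]
        simp only [hp, if_neg h1]
        push_cast
        field_simp
        ring
      · have h0' : ¬ (i + 1 ≤ N) := h1
        simp only [hp, if_neg h1, if_neg h0]
        push_cast
        ring
  have hstep0 : ∀ i, 0 ≤ p (i + 1) - p i := by
    intro i
    rcases hstep i with h | h <;> rw [h] <;>
      exact div_nonneg (by linarith) hN0.le
  have hstepb : ∀ i, p (i + 1) - p i < δ := by
    intro i
    have hle : p (i + 1) - p i ≤ (b - a) / N := by
      rcases hstep i with h | h <;> rw [h] <;> gcongr <;> linarith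
    linarith
  have hmono : ∀ i, p i ≤ p (i + 1) := fun i => by linarith [hstep0 i]
  have hpmono : Monotone p := monotone_nat_of_le_succ hmono
  set P : TaggedPartition a b :=
    ⟨2 * N, p, p, hmono, hp0, hp2N, fun i => ⟨le_rfl, hmono i⟩⟩ with hP
  have hRSI : |RSsum f u P - I| < ε := hδ P (fun i _ => hstepb i)
  have hRSsum : RSsum f u P
      = ∑ i ∈ Finset.range (2 * N), f (p i) * (u (p (i + 1)) - u (p i)) := rfl
  have hpmem : ∀ i ≤ 2 * N, p i ∈ Set.Icc a b := by
    intro i hi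
    constructor
    · rw [← hp0]; exact hpmono (Nat.zero_le i)
    · rw [← hp2N]; exact hpmono hi
  have hS : S = ∑ i ∈ Finset.range (2 * N),
      (if i < N then f a else f b) * (u (p (i + 1)) - u (p i)) := by
    rw [two_mul, Finset.sum_range_add]
    have h1 : ∑ i ∈ Finset.range N,
        (if i < N then f a else f b) * (u (p (i + 1)) - u (p i))
        = f a * (u x - u a) := by
      rw [show f a * (u x - u a) = f a * (u (p N) - u (p 0)) by rw [hpN, hp0]]
      rw [← Finset.sum_range_sub (fun i => u (p i)) N, Finset.mul_sum]
      apply Finset.sum_congr rfl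
      intro i hi
      rw [if_pos (Finset.mem_range.mp hi)]
    have h2 : ∑ i ∈ Finset.range N,
        (if N + i < N then f a else f b) * (u (p (N + i + 1)) - u (p (N + i)))
        = f b * (u b - u x) := by
      rw [show f b * (u b - u x) = f b * (u (p (N + N)) - u (p (N + 0))) by
        rw [← two_mul, hp2N]; simp [hpN]]
      rw [← Finset.sum_range_sub (fun i => u (p (N + i))) N, Finset.mul_sum]
      apply Finset.sum_congr rfl
      intro i _
      rw [if_neg (by omega), Nat.add_assoc]
    rw [h1, h2, hSdef]
    ring
  have hptw : ∀ i ∈ Finset.range (2 * N),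
      |f (p i) - (if i < N then f a else f b)| ≤ H * K ^ r := by
    intro i hi
    have hi2N : i ≤ 2 * N := le_of_lt (Finset.mem_range.mp hi)
    have hmem := hpmem i hi2N
    by_cases h : i < N
    · rw [if_pos h]
      have hpx : p i ≤ x := by rw [← hpN]; exact hpmono h.le
      have h1 : |f (p i) - f a| ≤ H * |p i - a| ^ r :=
        hf _ hmem _ (Set.left_mem_Icc.mpr hab)
      have h2 : |p i - a| ≤ K := by
        rw [abs_of_nonneg (by linarith [hmem.1])]
        linarith [hmem.1]
      calc |f (p i) - f a| ≤ H * |p i - a| ^ r := h1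
        _ ≤ H * K ^ r := by
            apply mul_le_mul_of_nonneg_left _ hH
            exact Real.rpow_le_rpow (abs_nonneg _) h2 hr.le
    · rw [if_neg h]
      have hpx : x ≤ p i := by rw [← hpN]; exact hpmono (not_lt.mp h)
      have h1 : |f (p i) - f b| ≤ H * |p i - b| ^ r :=
        hf _ hmem _ (Set.right_mem_Icc.mpr hab)
      have h2 : |p i - b| ≤ K := by
        rw [abs_of_nonpos (by linarith [hmem.2])]
        linarith [hmem.2]
      calc |f (p i) - f b| ≤ H * |p i - b| ^ r := h1
        _ ≤ H * K ^ r := by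
            apply mul_le_mul_of_nonneg_left _ hH
            exact Real.rpow_le_rpow (abs_nonneg _) h2 hr.le
  have hvar : ∑ i ∈ Finset.range (2 * N), |u (p (i + 1)) - u (p i)| ≤ totalVar u a b := by
    set q : ℕ → ℝ := fun i => p (min i (2 * N)) with hq
    have hqmono : Monotone q := hpmono.comp (fun i j hij => min_le_min hij le_rfl)
    have hqmem : ∀ i, q i ∈ Set.Icc a b := fun i => hpmem _ (min_le_right _ _)
    have hsum := eVariationOn.sum_le (f := u) (n := 2 * N) hqmono hqmem
    have heq : ∀ i ∈ Finset.range (2 * N),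
        ENNReal.ofReal |u (p (i + 1)) - u (p i)| = edist (u (q (i + 1))) (u (q i)) := by
      intro i hi
      have hi' : i < 2 * N := Finset.mem_range.mp hi
      have e1 : q i = p i := by rw [hq]; simp [min_eq_left hi'.le]
      have e2 : q (i + 1) = p (i + 1) := by rw [hq]; simp [min_eq_left (show i + 1 ≤ 2 * N by omega)]
      rw [e1, e2, edist_dist, Real.dist_eq]
    have hle : ENNReal.ofReal (∑ i ∈ Finset.range (2 * N), |u (p (i + 1)) - u (p i)|)
        ≤ eVariationOn u (Set.Icc a b) := by
      calc ENNReal.ofReal (∑ i ∈ Finset.range (2 * N), |u (p (i + 1)) - u (p i)|)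
          = ∑ i ∈ Finset.range (2 * N), ENNReal.ofReal |u (p (i + 1)) - u (p i)| :=
            ENNReal.ofReal_sum_of_nonneg (fun i _ => abs_nonneg _)
        _ = ∑ i ∈ Finset.range (2 * N), edist (u (q (i + 1))) (u (q i)) :=
            Finset.sum_congr rfl heq
        _ ≤ eVariationOn u (Set.Icc a b) := hsum
    have hfin := ENNReal.toReal_mono hu hle
    rwa [ENNReal.toReal_ofReal (Finset.sum_nonneg fun i _ => abs_nonneg _)] at hfin
  have hdiff : |RSsum f u P - S| ≤ H * K ^ r * totalVar u a b := by
    rw [hRSsum, hS, ← Finset.sum_sub_distrib]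
    calc |∑ i ∈ Finset.range (2 * N),
            (f (p i) * (u (p (i + 1)) - u (p i))
              - (if i < N then f a else f b) * (u (p (i + 1)) - u (p i)))|
        ≤ ∑ i ∈ Finset.range (2 * N),
            |f (p i) * (u (p (i + 1)) - u (p i))
              - (if i < N then f a else f b) * (u (p (i + 1)) - u (p i))| :=
          Finset.abs_sum_le_sum_abs _ _
      _ = ∑ i ∈ Finset.range (2 * N),
            |f (p i) - (if i < N then f a else f b)| * |u (p (i + 1)) - u (p i)| := by
          apply Finset.sum_congr rfl
          intro i _
          rw [← sub_mul, abs_mul]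
      _ ≤ ∑ i ∈ Finset.range (2 * N),
            (H * K ^ r) * |u (p (i + 1)) - u (p i)| := by
          apply Finset.sum_le_sum
          intro i hi
          exact mul_le_mul_of_nonneg_right (hptw i hi) (abs_nonneg _)
      _ = (H * K ^ r) * ∑ i ∈ Finset.range (2 * N), |u (p (i + 1)) - u (p i)| :=
          (Finset.mul_sum _ _ _).symm
      _ ≤ H * K ^ r * totalVar u a b := mul_le_mul_of_nonneg_left hvar hHK0
  calc |I - S| ≤ |I - RSsum f u P| + |RSsum f u P - S| := abs_sub_le _ _ _
    _ ≤ H * K ^ r * totalVar u a b + ε := by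
        rw [abs_sub_comm I]
        linarith
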